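/- Under the hypotheses of Moshchevitin's construction with W_k ≥ 8, one has the lower bound |η − (b_kα − c_k)| > (1/2 − 2/W_k)·(1/v_k) for all k. -/

import Mathlib

lemma numkey (A W x : ℝ) (h8 : 8 ≤ W) (hWA : W ≤ A) (hx : 1 ≤ x) :
    (1/2 - 2/W) * (1/x) < (A - A/W)/2 * (1/((A + 9/8)*x)) - 9/(14*(A*x)) := by
  have hW0 : 0 < W := by linarith
  have hA0 : 0 < A := by linarith
  have hx0 : 0 < x := by linarith
  have hA9 : 0 < A + 9/8 := by linarith
  have key : (1/2 - 2/W) < (A - A/W)/2 * (1/(A + 9/8)) - 9/(14*A) := by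
    rw [show (A - A/W)/2 * (1/(A + 9/8)) - 9/(14*A)
        = ((A - A/W)*(14*A) - 9*(2*(A+9/8))) / (2*(A+9/8)*(14*A)) by field_simp]
    rw [show (1:ℝ)/2 - 2/W = (W - 4)/(2*W) by field_simp; ring]
    rw [div_lt_div_iff₀ (by positivity) (by positivity)]
    have h1 : A/W * W = A := div_mul_cancel₀ A hW0.ne'
    have h2 : A*(A/W*W) = A*A := by rw [h1]
    nlinarith [mul_le_mul_of_nonneg_left hWA hA0.le, mul_pos hA0 hW0, h2,
      mul_le_mul_of_nonneg_left h8 hA0.le, sq_nonneg (A - W)]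
  calc (1/2 - 2/W) * (1/x) < ((A - A/W)/2 * (1/(A + 9/8)) - 9/(14*A)) * (1/x) := by
        apply mul_lt_mul_of_pos_right key (by positivity)
    _ = (A - A/W)/2 * (1/((A + 9/8)*x)) - 9/(14*(A*x)) := by field_simp

set_option maxHeartbeats 1000000 in


/-- Lower bound |η − (b_kα − c_k)| > (1/2 − 2/W_k)·(1/v_k) in Moshchevitin's
    construction, assuming W_k ≥ 8. -/
theorem eta_lower_bound
    (α : ℝ) (hα : Irrational α) (a : ℕ → ℕ) (u : ℕ → ℤ) (v P Q lam W : ℕ → ℕ)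
    (ha : ∀ j, 1 ≤ j → 1 ≤ a j)
    (hv0 : v 0 = 1) (hv1 : v 1 = a 1)
    (hvrec : ∀ k, 1 ≤ k → v (k + 1) = a (k + 1) * v k + v (k - 1))
    (hvpos : ∀ k, 0 < v k)
    -- u_k/v_k are the convergents of α:
    (hconv : ∀ j, 1 / ((v (j + 1) : ℝ) + (v j : ℝ)) ≤ |(v j : ℝ) * α - (u j : ℝ)| ∧
      |(v j : ℝ) * α - (u j : ℝ)| ≤ 1 / (v (j + 1) : ℝ))
    (hsign : ∀ j, 0 < (-1 : ℝ) ^ j * ((v j : ℝ) * α - (u j : ℝ)))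
    (hPpos : ∀ l, 0 < P l) (hQpos : ∀ l, 0 < Q l) (hlampos : ∀ j, 0 < lam j)
    (hPQ : ∀ l, P (l + 1) = P l * Q (l + 1))
    -- |λ_{k+1} − a_{k+1}/(2 P_{[k/2]})| ≤ Q_{[k/2]+1}/2:
    (hlam : ∀ k, |(lam (k + 1) : ℝ) - (a (k + 1) : ℝ) / (2 * (P (k / 2) : ℝ))| ≤
      (Q (k / 2 + 1) : ℝ) / 2)
    -- a_{k+1} ≥ W_k · P_{[k/2]+1}:
    (haW : ∀ k, W k * P (k / 2 + 1) ≤ a (k + 1))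
    (hWtend : Filter.Tendsto W Filter.atTop Filter.atTop) (hWpos : ∀ k, 0 < W k)
    (b : ℕ → ℕ) (c : ℕ → ℤ)
    (hb : ∀ k, b k = ∑ j ∈ Finset.range k, P (j / 2) * lam (j + 1) * v j)
    (hc : ∀ k, c k = ∑ j ∈ Finset.range k, (P (j / 2) : ℤ) * (lam (j + 1) : ℤ) * u j)
    (η : ℝ)
    (hη : HasSum (fun j : ℕ => (P (j / 2) : ℝ) * (lam (j + 1) : ℝ) *
      ((v j : ℝ) * α - (u j : ℝ))) η)
    (hW8 : ∀ k, 8 ≤ W k) :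
    ∀ k, (1 / 2 - 2 / (W k : ℝ)) * (1 / (v k : ℝ)) <
      |η - ((b k : ℝ) * α - (c k : ℝ))| := by
  intro k
  set f : ℕ → ℝ := fun j => (P (j / 2) : ℝ) * (lam (j + 1) : ℝ) *
      ((v j : ℝ) * α - (u j : ℝ)) with hfdef
  have hvR : ∀ j, (0:ℝ) < (v j : ℝ) := fun j => by exact_mod_cast hvpos j
  have hv1R : ∀ j, (1:ℝ) ≤ (v j : ℝ) := fun j => by exact_mod_cast hvpos j
  have haWn : ∀ j, W j ≤ a (j + 1) := fun j =>
    le_trans (Nat.le_mul_of_pos_right _ (hPpos _)) (haW j)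
  have ha8n : ∀ j, 8 ≤ a (j + 1) := fun j => (hW8 j).trans (haWn j)
  have haR : ∀ j, (8:ℝ) ≤ (a (j+1) : ℝ) := fun j => by exact_mod_cast ha8n j
  have haR0 : ∀ j, (0:ℝ) < (a (j+1) : ℝ) := fun j => lt_of_lt_of_le (by norm_num) (haR j)
  have hAv : ∀ j, a (j + 1) * v j ≤ v (j + 1) := by
    intro j
    cases j with
    | zero => simp [hv0, hv1]
    | succ m =>
      rw [hvrec (m+1) (by omega)]
      exact Nat.le_add_right _ _
  have hgrow : ∀ j, 8 * v j ≤ v (j + 1) := fun j =>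
    le_trans (Nat.mul_le_mul_right _ (ha8n j)) (hAv j)
  have hpow : ∀ m n, 8 ^ n * v m ≤ v (n + m) := by
    intro m n
    induction n with
    | zero => simp
    | succ p ih =>
      have h : 8 ^ (p+1) * v m = 8 * (8 ^ p * v m) := by ring
      rw [h]
      calc 8 * (8 ^ p * v m) ≤ 8 * v (p + m) := Nat.mul_le_mul_left _ ih
        _ ≤ v (p + m + 1) := hgrow _
        _ = v (p + 1 + m) := by ring_nf
  -- bounds on P * lam
  have hPl : ∀ j, ((a (j+1) : ℝ) - (P (j/2 + 1) : ℝ)) / 2 ≤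
      (P (j / 2) : ℝ) * (lam (j + 1) : ℝ) ∧
      (P (j / 2) : ℝ) * (lam (j + 1) : ℝ) ≤
        ((a (j+1) : ℝ) + (P (j/2 + 1) : ℝ)) / 2 := by
    intro j
    have hP0 : (0:ℝ) < (P (j/2) : ℝ) := by exact_mod_cast hPpos (j/2)
    obtain ⟨h1, h2⟩ := abs_le.mp (hlam j)
    have e1 : (P (j/2) : ℝ) * ((a (j+1) : ℝ) / (2 * (P (j/2) : ℝ))) = (a (j+1):ℝ)/2 := by
      field_simp
    have e2 : (P (j/2) : ℝ) * ((Q (j/2 + 1) : ℝ)/2) = (P (j/2+1) : ℝ)/2 := by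
      rw [hPQ (j/2)]; push_cast; ring
    constructor
    · nlinarith [mul_le_mul_of_nonneg_left h1 hP0.le]
    · nlinarith [mul_le_mul_of_nonneg_left h2 hP0.le]
  have hP'W : ∀ j, (P (j/2 + 1) : ℝ) ≤ (a (j+1) : ℝ) / (W j : ℝ) := by
    intro j
    have hW0 : (0:ℝ) < (W j : ℝ) := by exact_mod_cast hWpos j
    rw [le_div_iff₀ hW0]
    have h : ((W j * P (j/2+1) : ℕ) : ℝ) ≤ (a (j+1) : ℝ) := by exact_mod_cast haW j
    push_cast at h
    linarith
  have hP'8 : ∀ j, (P (j/2 + 1) : ℝ) ≤ (a (j+1) : ℝ) / 8 := by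
    intro j
    refine (hP'W j).trans ?_
    apply div_le_div_of_nonneg_left (haR0 j).le (by norm_num)
    exact_mod_cast hW8 j
  -- per-term upper bound
  have hfub : ∀ j, |f j| ≤ 9/16 * (1 / (v j : ℝ)) := by
    intro j
    have hP0 : (0:ℝ) ≤ (P (j/2) : ℝ) * (lam (j+1) : ℝ) := by positivity
    have hA0 : (0:ℝ) < (a (j+1) : ℝ) := haR0 j
    have habs : |f j| = (P (j/2) : ℝ) * (lam (j+1) : ℝ) * |(v j : ℝ) * α - u j| := by
      rw [hfdef, abs_mul, abs_of_nonneg hP0]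
    have hub := (hconv j).2
    have hAv' : (a (j+1) : ℝ) * (v j : ℝ) ≤ (v (j+1) : ℝ) := by exact_mod_cast hAv j
    have hstep : (1:ℝ) / (v (j+1) : ℝ) ≤ 1 / ((a (j+1) : ℝ) * (v j : ℝ)) :=
      one_div_le_one_div_of_le (mul_pos hA0 (hvR j)) hAv'
    have hPl2 : (P (j/2) : ℝ) * (lam (j+1) : ℝ) ≤ 9/16 * (a (j+1) : ℝ) := by
      have h1 := (hPl j).2
      have h2 := hP'8 j
      linarith
    calc |f j| = (P (j/2) : ℝ) * (lam (j+1) : ℝ) * |(v j : ℝ) * α - u j| := habs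
      _ ≤ (P (j/2) : ℝ) * (lam (j+1) : ℝ) * (1 / (v (j+1) : ℝ)) :=
          mul_le_mul_of_nonneg_left hub hP0
      _ ≤ (9/16 * (a (j+1) : ℝ)) * (1 / ((a (j+1) : ℝ) * (v j : ℝ))) :=
          mul_le_mul hPl2 hstep (by positivity) (by positivity)
      _ = 9/16 * (1 / (v j : ℝ)) := by
          rw [mul_one_div, mul_one_div, div_eq_div_iff (mul_pos hA0 (hvR j)).ne' (hvR j).ne']
          ring
  -- tail sums
  set T : ℕ → ℝ := fun m => η - ∑ j ∈ Finset.range m, f j with hTdef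
  have hT : ∀ m, HasSum (fun n => f (n + m)) (T m) := by
    intro m
    rw [hasSum_nat_add_iff m]
    simpa [hTdef, sub_add_cancel] using hη
  -- tail bound
  have htail : |T (k+1)| ≤ 9 / (14 * (v (k+1) : ℝ)) := by
    set C : ℝ := 9/16 * (1 / (v (k+1) : ℝ)) with hCdef
    have hC0 : 0 ≤ C := by positivity
    have hgeo : HasSum (fun n : ℕ => C * (1/8 : ℝ) ^ n) (C * (8/7)) := by
      have h := (hasSum_geometric_of_lt_one (by norm_num : (0:ℝ) ≤ 1/8)
        (by norm_num : (1/8:ℝ) < 1)).mul_left C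
      rw [show (8/7 : ℝ) = (1 - 1/8)⁻¹ by norm_num]
      exact h
    have hbd : ∀ n, |f (n + (k+1))| ≤ C * (1/8) ^ n := by
      intro n
      refine (hfub _).trans ?_
      have hp : ((8:ℝ) ^ n * (v (k+1) : ℝ)) ≤ (v (n + (k+1)) : ℝ) := by
        exact_mod_cast hpow (k+1) n
      have h1 : (1:ℝ) / (v (n + (k+1)) : ℝ) ≤ 1 / ((8:ℝ)^n * (v (k+1) : ℝ)) :=
        one_div_le_one_div_of_le (mul_pos (by positivity) (hvR (k+1))) hp
      have e : C * (1/8:ℝ) ^ n = 9/16 * (1 / ((8:ℝ)^n * (v (k+1) : ℝ))) := by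
        rw [hCdef]
        rw [div_pow, one_pow]
        field_simp
      rw [e]
      linarith
    have hup : T (k+1) ≤ C * (8/7) :=
      hasSum_le (fun n => (le_abs_self _).trans (hbd n)) (hT (k+1)) hgeo
    have hlo : -(C * (8/7)) ≤ T (k+1) := by
      refine hasSum_le (fun n => ?_) hgeo.neg (hT (k+1))
      have h1 := neg_abs_le (f (n + (k+1)))
      have h2 := hbd n
      simp only [neg_le]
      linarith
    have h3 : |T (k+1)| ≤ C * (8/7) := abs_le.mpr ⟨hlo, hup⟩
    have e2 : C * (8/7) = 9 / (14 * (v (k+1) : ℝ)) := by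
      rw [hCdef]; field_simp; ring
    linarith
  -- rewrite the goal
  have hbc : (b k : ℝ) * α - (c k : ℝ) = ∑ j ∈ Finset.range k, f j := by
    rw [hb k, hc k]
    push_cast
    rw [Finset.sum_mul, ← Finset.sum_sub_distrib]
    apply Finset.sum_congr rfl
    intro j _
    ring
  have hgoal : η - ((b k : ℝ) * α - (c k : ℝ)) = T k := by rw [hbc]
  rw [hgoal]
  -- relate T k and T (k+1)
  have hTk1 : T (k+1) = T k - f k := by
    simp only [hTdef, Finset.sum_range_succ]
    ring
  have htri : |f k| - |T (k+1)| ≤ |T k| := by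
    have hfk : f k = T k - T (k+1) := by rw [hTk1]; ring
    have h := abs_add_le (T k - T (k+1)) (T (k+1))
    simp only [sub_add_cancel] at h
    rw [hfk]
    have h2 := abs_sub_abs_le_abs_sub (T k) (T (k+1))
    calc |T k - T (k+1)| - |T (k+1)| ≤ |T k| + |T (k+1)| - |T (k+1)| := by
          have := abs_sub (T k) (T (k+1))
          linarith [abs_add_le (T k) (-(T (k+1))), abs_neg (T (k+1))]
      _ = |T k| := by ring
  -- main term lower bound
  have hW0 : (0:ℝ) < (W k : ℝ) := by exact_mod_cast hWpos k
  have h8 : (8:ℝ) ≤ (W k : ℝ) := by exact_mod_cast hW8 k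
  have hWA : (W k : ℝ) ≤ (a (k+1) : ℝ) := by exact_mod_cast haWn k
  have hx1 : (1:ℝ) ≤ (v k : ℝ) := hv1R k
  have hA0 : (0:ℝ) < (a (k+1) : ℝ) := haR0 k
  have hden : (v (k+1) : ℝ) + (v k : ℝ) ≤ ((a (k+1) : ℝ) + 9/8) * (v k : ℝ) := by
    cases k with
    | zero =>
      rw [hv0, hv1]
      push_cast
      nlinarith [haR0 0]
    | succ m =>
      have hrec : (v (m+2) : ℝ) = (a (m+2) : ℝ) * (v (m+1) : ℝ) + (v m : ℝ) := by
        rw [hvrec (m+1) (by omega)]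
        push_cast
        norm_num
      have hg : (8:ℝ) * (v m : ℝ) ≤ (v (m+1) : ℝ) := by exact_mod_cast hgrow m
      rw [hrec]
      nlinarith [hvR m, hvR (m+1)]
  have hflb : ((a (k+1) : ℝ) - (a (k+1) : ℝ)/(W k : ℝ))/2 *
      (1/(((a (k+1) : ℝ) + 9/8) * (v k : ℝ))) ≤ |f k| := by
    have hP0 : (0:ℝ) ≤ (P (k/2) : ℝ) * (lam (k+1) : ℝ) := by positivity
    have habs : |f k| = (P (k/2) : ℝ) * (lam (k+1) : ℝ) * |(v k : ℝ) * α - u k| := by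
      rw [hfdef, abs_mul, abs_of_nonneg hP0]
    have hlb : ((a (k+1) : ℝ) - (a (k+1) : ℝ)/(W k : ℝ))/2 ≤
        (P (k/2) : ℝ) * (lam (k+1) : ℝ) := by
      have h1 := (hPl k).1
      have h2 := hP'W k
      linarith
    have hc2 : 1/(((a (k+1) : ℝ) + 9/8) * (v k : ℝ)) ≤
        1/((v (k+1) : ℝ) + (v k : ℝ)) :=
      one_div_le_one_div_of_le (by positivity) hden
    rw [habs]
    exact mul_le_mul hlb (hc2.trans (hconv k).1) (by positivity) hP0
  have htail2 : |T (k+1)| ≤ 9/(14*((a (k+1) : ℝ) * (v k : ℝ))) := by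
    refine htail.trans ?_
    have hAv' : (a (k+1) : ℝ) * (v k : ℝ) ≤ (v (k+1) : ℝ) := by exact_mod_cast hAv k
    apply div_le_div_of_nonneg_left (by norm_num) (by positivity)
    nlinarith
  have hnum := numkey (a (k+1) : ℝ) (W k : ℝ) (v k : ℝ) h8 hWA hx1
  linarith
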